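/- arXiv:1801.02090 — 3 statements merged into one kernel-verified Lean document; each statement's English description precedes it below -/
import Mathlib

section
/- Let L be a real continuous symmetric function on a metric space X satisfying the negative definite kernel inequality. Then for all probability measures μ, ν for which the double integrals exist, 2∫∫ L dμ dν − ∫∫ L dμ dμ − ∫∫ L dν dν ≥ 0. -/
open MeasureTheory
open scoped ComplexOrder

section helpers

variable {α β γ δ : Type*} [MeasurableSpace α] [MeasurableSpace β] [MeasurableSpace γ]
  [MeasurableSpace δ]

lemma integral_comp_proj (T : α → γ) (hT : Measurable T) (μ : Measure α) (μ' : Measure γ)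
    (hmap : μ.map T = μ') (f : γ → ℝ) (hf : AEStronglyMeasurable f μ') :
    ∫ x, f (T x) ∂μ = ∫ y, f y ∂μ' := by
  rw [← hmap] at hf ⊢
  exact (integral_map hT.aemeasurable hf).symm

lemma integrable_comp_proj (T : α → γ) (hT : Measurable T) (μ : Measure α) (μ' : Measure γ)
    (hmap : μ.map T = μ') (f : γ → ℝ) (hf : Integrable f μ') :
    Integrable (fun x => f (T x)) μ := by
  rw [← hmap] at hf
  exact (integrable_map_measure hf.aestronglyMeasurable hT.aemeasurable).1 hf

lemma map_fst_prob (μ : Measure α) (ν : Measure β)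
    [SFinite μ] [SFinite ν] [IsProbabilityMeasure ν] : (μ.prod ν).map Prod.fst = μ := by simp

lemma map_snd_prob (μ : Measure α) (ν : Measure β)
    [SFinite μ] [SFinite ν] [IsProbabilityMeasure μ] : (μ.prod ν).map Prod.snd = ν := by simp

lemma map_pair (ρ₁ : Measure α) (ρ₂ : Measure β) [SFinite ρ₁] [SFinite ρ₂]
    (f : α → γ) (g : β → δ) (hf : Measurable f) (hg : Measurable g)
    (m1 : Measure γ) (m2 : Measure δ)
    (hfm : ρ₁.map f = m1) (hgm : ρ₂.map g = m2) :
    (ρ₁.prod ρ₂).map (Prod.map f g) = m1.prod m2 := by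
  rw [← Measure.map_prod_map _ _ hf hg, hfm, hgm]

lemma prod_integrable_decomp (m1 m2 : Measure α)
    [IsProbabilityMeasure m1] [IsProbabilityMeasure m2] (L : α → α → ℝ) (gL : α → ℝ) (c : ℝ)
    (hL : Integrable (fun p : α × α => L p.1 p.2) (m1.prod m2))
    (h1 : Integrable gL m1) (h2 : Integrable gL m2) :
    Integrable (fun p : α × α => gL p.1 + gL p.2 - L p.1 p.2 - c) (m1.prod m2) := by
  have i1 : Integrable (fun p : α × α => gL p.1) (m1.prod m2) :=
    integrable_comp_proj Prod.fst measurable_fst _ _ (map_fst_prob m1 m2) gL h1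
  have i2 : Integrable (fun p : α × α => gL p.2) (m1.prod m2) :=
    integrable_comp_proj Prod.snd measurable_snd _ _ (map_snd_prob m1 m2) gL h2
  exact (((i1.add i2).sub hL).sub (integrable_const c))

lemma prod_integral_decomp (m1 m2 : Measure α)
    [IsProbabilityMeasure m1] [IsProbabilityMeasure m2] (L : α → α → ℝ) (gL : α → ℝ) (c : ℝ)
    (hL : Integrable (fun p : α × α => L p.1 p.2) (m1.prod m2))
    (h1 : Integrable gL m1) (h2 : Integrable gL m2) :
    ∫ p : α × α, (gL p.1 + gL p.2 - L p.1 p.2 - c) ∂m1.prod m2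
      = ∫ x, gL x ∂m1 + ∫ x, gL x ∂m2 - (∫ p : α × α, L p.1 p.2 ∂m1.prod m2) - c := by
  have i1 : Integrable (fun p : α × α => gL p.1) (m1.prod m2) :=
    integrable_comp_proj Prod.fst measurable_fst _ _ (map_fst_prob m1 m2) gL h1
  have i2 : Integrable (fun p : α × α => gL p.2) (m1.prod m2) :=
    integrable_comp_proj Prod.snd measurable_snd _ _ (map_snd_prob m1 m2) gL h2
  have j1 : Integrable (fun p : α × α => gL p.1 + gL p.2) (m1.prod m2) := i1.add i2
  have j2 : Integrable (fun p : α × α => gL p.1 + gL p.2 - L p.1 p.2) (m1.prod m2) :=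
    j1.sub hL
  rw [integral_sub j2 (integrable_const c), integral_sub j1 hL, integral_add i1 i2,
    integral_comp_proj Prod.fst measurable_fst _ _ (map_fst_prob m1 m2) gL h1.1,
    integral_comp_proj Prod.snd measurable_snd _ _ (map_snd_prob m1 m2) gL h2.1,
    integral_const]
  simp

end helpers

universe u

/-- Abstract doubling lemma. -/
theorem energy_lower_bound : ∀ (n : ℕ) {Z : Type u} [MeasurableSpace Z] (ρ : Measure Z)
    [IsProbabilityMeasure ρ] (K : Z → Z → ℝ) (D : Z → ℝ),
    (∀ (ι : Type) (_ : Fintype ι) (p : ι → Z), 0 ≤ ∑ i, ∑ j, K (p i) (p j)) →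
    (∀ z, K z z ≤ D z) →
    Integrable (fun q : Z × Z => K q.1 q.2) (ρ.prod ρ) →
    Integrable D ρ →
    0 ≤ ((2:ℝ)^(n+1) - 1) * (∫ q : Z × Z, K q.1 q.2 ∂ρ.prod ρ) + ∫ z, D z ∂ρ := by
  intro n
  induction n with
  | zero =>
    intro Z _ ρ _ K D hQ hD hKi hDi
    have hKi' : Integrable (fun q : Z × Z => K q.2 q.1) (ρ.prod ρ) := by
      have := hKi.swap
      simpa [Function.comp_def] using this
    have hD1 : Integrable (fun q : Z × Z => D q.1) (ρ.prod ρ) :=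
      integrable_comp_proj Prod.fst measurable_fst _ _ (map_fst_prob ρ ρ) D hDi
    have hD2 : Integrable (fun q : Z × Z => D q.2) (ρ.prod ρ) :=
      integrable_comp_proj Prod.snd measurable_snd _ _ (map_snd_prob ρ ρ) D hDi
    have hpt : ∀ q : Z × Z, 0 ≤ K q.1 q.2 + K q.2 q.1 + (D q.1 + D q.2) := by
      intro q
      have h2 := hQ (Fin 2) inferInstance (fun i => if i = 0 then q.1 else q.2)
      simp [Fin.sum_univ_two] at h2
      have d1 := hD q.1
      have d2 := hD q.2
      linarith
    have hint : 0 ≤ ∫ q : Z × Z, (K q.1 q.2 + K q.2 q.1 + (D q.1 + D q.2)) ∂ρ.prod ρ :=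
      integral_nonneg hpt
    have hs1 : Integrable (fun q : Z × Z => K q.1 q.2 + K q.2 q.1) (ρ.prod ρ) := hKi.add hKi'
    have hs2 : Integrable (fun q : Z × Z => D q.1 + D q.2) (ρ.prod ρ) := hD1.add hD2
    rw [integral_add hs1 hs2, integral_add hKi hKi', integral_add hD1 hD2] at hint
    have hswap : ∫ q : Z × Z, K q.2 q.1 ∂ρ.prod ρ = ∫ q : Z × Z, K q.1 q.2 ∂ρ.prod ρ := by
      have := integral_prod_swap (μ := ρ) (ν := ρ) (fun q : Z × Z => K q.1 q.2)
      simpa using this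
    have hDfst : ∫ q : Z × Z, D q.1 ∂ρ.prod ρ = ∫ z, D z ∂ρ :=
      integral_comp_proj Prod.fst measurable_fst _ _ (map_fst_prob ρ ρ) D hDi.1
    have hDsnd : ∫ q : Z × Z, D q.2 ∂ρ.prod ρ = ∫ z, D z ∂ρ :=
      integral_comp_proj Prod.snd measurable_snd _ _ (map_snd_prob ρ ρ) D hDi.1
    rw [hswap, hDfst, hDsnd] at hint
    norm_num
    linarith
  | succ n ih =>
    intro Z _ ρ _ K D hQ hD hKi hDi
    set ρ' := ρ.prod ρ with hρ'
    set K' : (Z × Z) → (Z × Z) → ℝ :=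
      fun u v => K u.1 v.1 + K u.1 v.2 + K u.2 v.1 + K u.2 v.2 with hK'
    set D' : Z × Z → ℝ := fun u => D u.1 + D u.2 + K u.1 u.2 + K u.2 u.1 with hD'def
    have hmapff := map_pair ρ' ρ' Prod.fst Prod.fst measurable_fst measurable_fst ρ ρ
      (map_fst_prob ρ ρ) (map_fst_prob ρ ρ)
    have hmapfs := map_pair ρ' ρ' Prod.fst Prod.snd measurable_fst measurable_snd ρ ρ
      (map_fst_prob ρ ρ) (map_snd_prob ρ ρ)
    have hmapsf := map_pair ρ' ρ' Prod.snd Prod.fst measurable_snd measurable_fst ρ ρ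
      (map_snd_prob ρ ρ) (map_fst_prob ρ ρ)
    have hmapss := map_pair ρ' ρ' Prod.snd Prod.snd measurable_snd measurable_snd ρ ρ
      (map_snd_prob ρ ρ) (map_snd_prob ρ ρ)
    have i11 : Integrable (fun q : (Z × Z) × (Z × Z) => K q.1.1 q.2.1) (ρ'.prod ρ') :=
      integrable_comp_proj _ (measurable_fst.prodMap measurable_fst) _ _ hmapff _ hKi
    have i12 : Integrable (fun q : (Z × Z) × (Z × Z) => K q.1.1 q.2.2) (ρ'.prod ρ') :=
      integrable_comp_proj _ (measurable_fst.prodMap measurable_snd) _ _ hmapfs _ hKi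
    have i21 : Integrable (fun q : (Z × Z) × (Z × Z) => K q.1.2 q.2.1) (ρ'.prod ρ') :=
      integrable_comp_proj _ (measurable_snd.prodMap measurable_fst) _ _ hmapsf _ hKi
    have i22 : Integrable (fun q : (Z × Z) × (Z × Z) => K q.1.2 q.2.2) (ρ'.prod ρ') :=
      integrable_comp_proj _ (measurable_snd.prodMap measurable_snd) _ _ hmapss _ hKi
    have hKi' : Integrable (fun q : (Z × Z) × (Z × Z) => K' q.1 q.2) (ρ'.prod ρ') := by
      simpa [hK', Pi.add_def] using ((i11.add i12).add i21).add i22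
    have hKswap : Integrable (fun u : Z × Z => K u.2 u.1) ρ' := by
      have := hKi.swap; simpa [Function.comp_def, hρ'] using this
    have hDd1 : Integrable (fun u : Z × Z => D u.1) ρ' :=
      integrable_comp_proj Prod.fst measurable_fst _ _ (map_fst_prob ρ ρ) D hDi
    have hDd2 : Integrable (fun u : Z × Z => D u.2) ρ' :=
      integrable_comp_proj Prod.snd measurable_snd _ _ (map_snd_prob ρ ρ) D hDi
    have hDi' : Integrable D' ρ' := by
      simpa [hD'def, Pi.add_def] using ((hDd1.add hDd2).add hKi).add hKswap
    have hQ' : ∀ (ι : Type) (_ : Fintype ι) (p : ι → Z × Z),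
        0 ≤ ∑ i, ∑ j, K' (p i) (p j) := by
      intro ι hι p
      have h := hQ (ι ⊕ ι) inferInstance (Sum.elim (fun i => (p i).1) (fun i => (p i).2))
      calc (0:ℝ) ≤ _ := h
        _ = ∑ i, ∑ j, K' (p i) (p j) := by
          simp only [Fintype.sum_sum_type, Sum.elim_inl, Sum.elim_inr, hK',
            ← Finset.sum_add_distrib]
          exact Finset.sum_congr rfl fun i _ => Finset.sum_congr rfl fun j _ => by ring
    have hDle : ∀ u : Z × Z, K' u u ≤ D' u := by
      intro u
      have := hD u.1; have := hD u.2
      simp only [hK', hD'def]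
      linarith
    have key := ih ρ' K' D' hQ' hDle hKi' hDi'
    have e11 : ∫ q : (Z × Z) × (Z × Z), K q.1.1 q.2.1 ∂ρ'.prod ρ'
        = ∫ q : Z × Z, K q.1 q.2 ∂ρ' :=
      integral_comp_proj _ (measurable_fst.prodMap measurable_fst) _ _ hmapff _ hKi.1
    have e12 : ∫ q : (Z × Z) × (Z × Z), K q.1.1 q.2.2 ∂ρ'.prod ρ'
        = ∫ q : Z × Z, K q.1 q.2 ∂ρ' :=
      integral_comp_proj _ (measurable_fst.prodMap measurable_snd) _ _ hmapfs _ hKi.1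
    have e21 : ∫ q : (Z × Z) × (Z × Z), K q.1.2 q.2.1 ∂ρ'.prod ρ'
        = ∫ q : Z × Z, K q.1 q.2 ∂ρ' :=
      integral_comp_proj _ (measurable_snd.prodMap measurable_fst) _ _ hmapsf _ hKi.1
    have e22 : ∫ q : (Z × Z) × (Z × Z), K q.1.2 q.2.2 ∂ρ'.prod ρ'
        = ∫ q : Z × Z, K q.1 q.2 ∂ρ' :=
      integral_comp_proj _ (measurable_snd.prodMap measurable_snd) _ _ hmapss _ hKi.1
    have he' : ∫ q : (Z × Z) × (Z × Z), K' q.1 q.2 ∂ρ'.prod ρ'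
        = 4 * ∫ q : Z × Z, K q.1 q.2 ∂ρ' := by
      have hfun : (fun q : (Z × Z) × (Z × Z) => K' q.1 q.2)
          = fun q => K q.1.1 q.2.1 + K q.1.1 q.2.2 + K q.1.2 q.2.1 + K q.1.2 q.2.2 := by
        funext q; simp [hK']
      have j1 : Integrable (fun q : (Z × Z) × (Z × Z) => K q.1.1 q.2.1 + K q.1.1 q.2.2)
          (ρ'.prod ρ') := i11.add i12
      have j2 : Integrable
          (fun q : (Z × Z) × (Z × Z) => K q.1.1 q.2.1 + K q.1.1 q.2.2 + K q.1.2 q.2.1)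
          (ρ'.prod ρ') := j1.add i21
      rw [hfun, integral_add j2 i22, integral_add j1 i21, integral_add i11 i12,
        e11, e12, e21, e22]
      ring
    have hswap : ∫ u : Z × Z, K u.2 u.1 ∂ρ' = ∫ u : Z × Z, K u.1 u.2 ∂ρ' := by
      have := integral_prod_swap (μ := ρ) (ν := ρ) (fun q : Z × Z => K q.1 q.2)
      simpa [hρ'] using this
    have hd' : ∫ u, D' u ∂ρ'
        = 2 * (∫ z, D z ∂ρ) + 2 * ∫ q : Z × Z, K q.1 q.2 ∂ρ' := by
      have hthis : D' = fun u : Z × Z => D u.1 + D u.2 + K u.1 u.2 + K u.2 u.1 := hD'def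
      have j1 : Integrable (fun u : Z × Z => D u.1 + D u.2) ρ' := hDd1.add hDd2
      have j2 : Integrable (fun u : Z × Z => D u.1 + D u.2 + K u.1 u.2) ρ' := j1.add hKi
      rw [hthis, integral_add j2 hKswap, integral_add j1 hKi, integral_add hDd1 hDd2]
      rw [integral_comp_proj Prod.fst measurable_fst _ _ (map_fst_prob ρ ρ) D hDi.1,
        integral_comp_proj Prod.snd measurable_snd _ _ (map_snd_prob ρ ρ) D hDi.1,
        hswap]
      ring
    rw [he', hd'] at key
    have hp : (2:ℝ)^(n+1+1) = 2 * 2^(n+1) := by ring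
    rw [hp]
    nlinarith [key]

lemma real_neg_def {X : Type*} (L : X → X → ℝ)
    (hneg : ∀ (n : ℕ) (c : Fin n → ℂ) (x : Fin n → X), (∑ i, c i) = 0 →
      ∑ i, ∑ j, (L (x i) (x j) : ℂ) * c i * (starRingEnd ℂ) (c j) ≤ 0) :
    ∀ (ι : Type) (_ : Fintype ι) (c : ι → ℝ) (x : ι → X), (∑ i, c i) = 0 →
      ∑ i, ∑ j, L (x i) (x j) * c i * c j ≤ 0 := by
  intro ι hι c x hc
  classical
  let e := Fintype.equivFin ι
  have hsum : (∑ k, ((c (e.symm k) : ℝ) : ℂ)) = 0 := by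
    rw [← Complex.ofReal_sum]
    rw [Equiv.sum_comp e.symm c, hc, Complex.ofReal_zero]
  have key := hneg (Fintype.card ι) (fun k => (c (e.symm k) : ℂ)) (fun k => x (e.symm k)) hsum
  have hre : ∑ k, ∑ l, (L (x (e.symm k)) (x (e.symm l)) : ℂ) * (c (e.symm k) : ℂ)
        * (starRingEnd ℂ) ((c (e.symm l) : ℝ) : ℂ)
      = ((∑ i, ∑ j, L (x i) (x j) * c i * c j : ℝ) : ℂ) := by
    have step1 : ∀ k, ∑ l, (L (x (e.symm k)) (x (e.symm l)) : ℂ) * (c (e.symm k) : ℂ)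
          * (starRingEnd ℂ) ((c (e.symm l) : ℝ) : ℂ)
        = ((∑ j, L (x (e.symm k)) (x j) * c (e.symm k) * c j : ℝ) : ℂ) := by
      intro k
      rw [Complex.ofReal_sum]
      rw [← Equiv.sum_comp e.symm
        (fun j => ((L (x (e.symm k)) (x j) * c (e.symm k) * c j : ℝ) : ℂ))]
      refine Finset.sum_congr rfl fun l _ => ?_
      rw [Complex.conj_ofReal]
      push_cast
      ring
    calc ∑ k, ∑ l, (L (x (e.symm k)) (x (e.symm l)) : ℂ) * (c (e.symm k) : ℂ)
          * (starRingEnd ℂ) ((c (e.symm l) : ℝ) : ℂ)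
        = ∑ k, ((∑ j, L (x (e.symm k)) (x j) * c (e.symm k) * c j : ℝ) : ℂ) :=
          Finset.sum_congr rfl fun k _ => step1 k
      _ = ((∑ i, ∑ j, L (x i) (x j) * c i * c j : ℝ) : ℂ) := by
          rw [← Complex.ofReal_sum]
          rw [Equiv.sum_comp e.symm (fun i => ∑ j, L (x i) (x j) * c i * c j)]
  rw [hre] at key
  exact_mod_cast key

lemma phi_pos_def {X : Type*} (L : X → X → ℝ) (hsymm : ∀ x y, L x y = L y x)
    (hneg : ∀ (n : ℕ) (c : Fin n → ℂ) (x : Fin n → X), (∑ i, c i) = 0 →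
      ∑ i, ∑ j, (L (x i) (x j) : ℂ) * c i * (starRingEnd ℂ) (c j) ≤ 0)
    (x₀ : X) :
    ∀ (ι : Type) (_ : Fintype ι) (c : ι → ℝ) (x : ι → X),
      0 ≤ ∑ i, ∑ j, (L (x i) x₀ + L (x j) x₀ - L (x i) (x j) - L x₀ x₀) * c i * c j := by
  intro ι hι c x
  classical
  set s := ∑ i, c i with hs
  set t := ∑ i, L (x i) x₀ * c i with ht
  set U := ∑ i, ∑ j, L (x i) (x j) * c i * c j with hU
  have hT : ∑ i, ∑ j, (L (x i) x₀ + L (x j) x₀ - L (x i) (x j) - L x₀ x₀) * c i * c j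
      = t * s + s * t - U - L x₀ x₀ * (s * s) := by
    have h1 : t * s = ∑ i, ∑ j, L (x i) x₀ * c i * c j := by
      rw [Fintype.sum_mul_sum]
    have h2 : s * t = ∑ i, ∑ j, L (x j) x₀ * c i * c j := by
      rw [Fintype.sum_mul_sum]
      exact Finset.sum_congr rfl fun i _ => Finset.sum_congr rfl fun j _ => by ring
    have h3 : L x₀ x₀ * (s * s) = ∑ i, ∑ j, L x₀ x₀ * (c i * c j) := by
      rw [Fintype.sum_mul_sum, Finset.mul_sum]
      exact Finset.sum_congr rfl fun i _ => by rw [Finset.mul_sum]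
    rw [h1, h2, h3, hU, ← Finset.sum_add_distrib, ← Finset.sum_sub_distrib,
      ← Finset.sum_sub_distrib]
    refine Finset.sum_congr rfl fun i _ => ?_
    rw [← Finset.sum_add_distrib, ← Finset.sum_sub_distrib, ← Finset.sum_sub_distrib]
    exact Finset.sum_congr rfl fun j _ => by ring
  have key := real_neg_def L hneg (Option ι) inferInstance
      (fun o => Option.elim o (-s) c) (fun o => Option.elim o x₀ x) ?_
  swap
  · rw [Fintype.sum_option]
    simp [hs]
  · rw [Fintype.sum_option] at key
    have inner_none : ∑ o : Option ι,
        L (Option.elim (none : Option ι) x₀ x) (Option.elim o x₀ x)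
          * Option.elim (none : Option ι) (-s) c * Option.elim o (-s) c
        = L x₀ x₀ * (-s) * (-s) + ∑ j, L x₀ (x j) * (-s) * c j := by
      rw [Fintype.sum_option]
      rfl
    have inner_some : ∀ i, ∑ o : Option ι,
        L (Option.elim (some i) x₀ x) (Option.elim o x₀ x)
          * Option.elim (some i) (-s) c * Option.elim o (-s) c
        = L (x i) x₀ * c i * (-s) + ∑ j, L (x i) (x j) * c i * c j := by
      intro i
      rw [Fintype.sum_option]
      rfl
    rw [inner_none] at key
    have key2 : L x₀ x₀ * (-s) * (-s) + ∑ j, L x₀ (x j) * (-s) * c j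
        + ∑ i, (L (x i) x₀ * c i * (-s) + ∑ j, L (x i) (x j) * c i * c j) ≤ 0 := by
      calc _ = L x₀ x₀ * (-s) * (-s) + ∑ j, L x₀ (x j) * (-s) * c j
          + ∑ i, ∑ o : Option ι,
            L (Option.elim (some i) x₀ x) (Option.elim o x₀ x)
              * Option.elim (some i) (-s) c * Option.elim o (-s) c := by
            rw [Finset.sum_congr rfl fun i _ => inner_some i]
        _ ≤ 0 := key
    have e1 : ∑ j, L x₀ (x j) * (-s) * c j = -s * t := by
      rw [ht, Finset.mul_sum]
      exact Finset.sum_congr rfl fun j _ => by rw [hsymm x₀ (x j)]; ring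
    have e2 : ∑ i, (L (x i) x₀ * c i * (-s) + ∑ j, L (x i) (x j) * c i * c j)
        = -s * t + U := by
      rw [Finset.sum_add_distrib, hU]
      congr 1
      rw [ht, Finset.mul_sum]
      exact Finset.sum_congr rfl fun i _ => by ring
    rw [e1, e2] at key2
    rw [hT]
    nlinarith [key2]


/-- If `L` is a real continuous symmetric negative definite kernel on a metric
space `X`, then for all probability measures `μ`, `ν` for which the double
integrals exist, `2∫∫ L dμ dν − ∫∫ L dμ dμ − ∫∫ L dν dν ≥ 0`. -/
theorem ndist_nonneg_of_neg_def {X : Type*} [MetricSpace X] [MeasurableSpace X]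
    [BorelSpace X] (L : X → X → ℝ)
    (hcont : Continuous fun p : X × X => L p.1 p.2)
    (hsymm : ∀ x y, L x y = L y x)
    (hneg : ∀ (n : ℕ) (c : Fin n → ℂ) (x : Fin n → X), (∑ i, c i) = 0 →
      ∑ i, ∑ j, (L (x i) (x j) : ℂ) * c i * (starRingEnd ℂ) (c j) ≤ 0)
    (μ ν : Measure X) [IsProbabilityMeasure μ] [IsProbabilityMeasure ν]
    (hμν : Integrable (fun p : X × X => L p.1 p.2) (μ.prod ν))
    (hμμ : Integrable (fun p : X × X => L p.1 p.2) (μ.prod μ))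
    (hνν : Integrable (fun p : X × X => L p.1 p.2) (ν.prod ν)) :
    0 ≤ 2 * (∫ p, L p.1 p.2 ∂μ.prod ν) - (∫ p, L p.1 p.2 ∂μ.prod μ)
        - (∫ p, L p.1 p.2 ∂ν.prod ν) := by
  classical
  -- pick a base point x₀ with integrable slices
  have h1 : ∀ᵐ x ∂μ, Integrable (fun y => L x y) μ := by
    simpa using hμμ.prod_right_ae
  have h2 : ∀ᵐ x ∂μ, Integrable (fun y => L x y) ν := by
    simpa using hμν.prod_right_ae
  have hne : (ae μ).NeBot := ae_neBot.2 (IsProbabilityMeasure.ne_zero μ)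
  obtain ⟨x₀, hx₀μ, hx₀ν⟩ := (h1.and h2).exists
  have hgLμ : Integrable (fun x => L x x₀) μ := by
    have heq : (fun x => L x x₀) = fun y => L x₀ y := funext fun y => hsymm y x₀
    rw [heq]; exact hx₀μ
  have hgLν : Integrable (fun x => L x x₀) ν := by
    have heq : (fun x => L x x₀) = fun y => L x₀ y := funext fun y => hsymm y x₀
    rw [heq]; exact hx₀ν
  have hνμ : Integrable (fun p : X × X => L p.1 p.2) (ν.prod μ) := by
    have := hμν.swap
    have heq : ((fun p : X × X => L p.1 p.2) ∘ Prod.swap) = fun p : X × X => L p.1 p.2 := by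
      funext p; exact hsymm p.2 p.1
    rwa [heq] at this
  set φ : X → X → ℝ := fun x y => L x x₀ + L y x₀ - L x y - L x₀ x₀ with hφdef
  have hφPD := phi_pos_def L hsymm hneg x₀
  have hφsymm : ∀ x y, φ x y = φ y x := by
    intro x y; simp only [hφdef]; rw [hsymm x y]; ring
  -- continuity facts
  have hgLcont : Continuous fun x : X => L x x₀ :=
    hcont.comp (continuous_id.prodMk continuous_const)
  have hLdiagcont : Continuous fun x : X => L x x :=
    hcont.comp (continuous_id.prodMk continuous_id)
  have hdiagcont : Continuous fun x : X => φ x x := by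
    simp only [hφdef]
    exact ((hgLcont.add hgLcont).sub hLdiagcont).sub continuous_const
  -- pointwise facts about φ
  have hφxx : ∀ z, 0 ≤ φ z z := by
    intro z
    have h := hφPD (Fin 1) inferInstance (fun _ => 1) (fun _ => z)
    simpa [Fin.sum_univ_one, hφdef] using h
  have hCS : ∀ a b : X, φ a b ^ 2 ≤ φ a a * φ b b := by
    intro a b
    have hquad : ∀ r : ℝ, 0 ≤ φ a a * (r * r) + (2 * φ a b) * r + φ b b := by
      intro r
      have h := hφPD (Fin 2) inferInstance (fun i => if i = 0 then r else 1)
        (fun i => if i = 0 then a else b)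
      simp [Fin.sum_univ_two] at h
      have hsy : L b x₀ + L a x₀ - L b a - L x₀ x₀
          = L a x₀ + L b x₀ - L a b - L x₀ x₀ := by rw [hsymm b a]; ring
      rw [hsy] at h
      simp only [hφdef]
      ring_nf at h ⊢
      linarith [h]
    have hd := discrim_le_zero hquad
    rw [discrim] at hd
    nlinarith [hd]
  -- integrability of φ on the products
  have hφμμ : Integrable (fun p : X × X => φ p.1 p.2) (μ.prod μ) :=
    prod_integrable_decomp μ μ L (fun x => L x x₀) (L x₀ x₀) hμμ hgLμ hgLμ
  have hφμν : Integrable (fun p : X × X => φ p.1 p.2) (μ.prod ν) :=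
    prod_integrable_decomp μ ν L (fun x => L x x₀) (L x₀ x₀) hμν hgLμ hgLν
  have hφνν : Integrable (fun p : X × X => φ p.1 p.2) (ν.prod ν) :=
    prod_integrable_decomp ν ν L (fun x => L x x₀) (L x₀ x₀) hνν hgLν hgLν
  have hφνμ : Integrable (fun p : X × X => φ p.1 p.2) (ν.prod μ) :=
    prod_integrable_decomp ν μ L (fun x => L x x₀) (L x₀ x₀) hνμ hgLν hgLμ
  -- truncations
  set A : ℕ → Set X := fun M => {x | φ x x ≤ (M : ℝ)} with hAdef
  have hAmeas : ∀ M, MeasurableSet (A M) := fun M =>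
    (isClosed_le hdiagcont continuous_const).measurableSet
  set g : ℕ → X → ℝ := fun M => (A M).indicator (fun _ => (1 : ℝ)) with hgdef
  have hgmeas : ∀ M, Measurable (g M) := fun M =>
    measurable_const.indicator (hAmeas M)
  set ψ : ℕ → X → X → ℝ := fun M x y => g M x * g M y * φ x y with hψdef
  have hg01 : ∀ M x, g M x = 0 ∨ g M x = 1 := by
    intro M x
    by_cases hx : x ∈ A M
    · right; simp [hgdef, Set.indicator_of_mem hx]
    · left; simp [hgdef, Set.indicator_of_notMem hx]
  have hψb : ∀ M x y, |ψ M x y| ≤ (M : ℝ) := by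
    intro M x y
    by_cases hx : x ∈ A M
    · by_cases hy : y ∈ A M
      · have e1 : g M x = 1 := by simp [hgdef, Set.indicator_of_mem hx]
        have e2 : g M y = 1 := by simp [hgdef, Set.indicator_of_mem hy]
        have e3 : ψ M x y = φ x y := by simp [hψdef, e1, e2]
        rw [e3]
        have hxa : φ x x ≤ (M : ℝ) := hx
        have hya : φ y y ≤ (M : ℝ) := hy
        have h0x := hφxx x
        have h0y := hφxx y
        have hcs := hCS x y
        nlinarith [abs_nonneg (φ x y), sq_abs (φ x y), Nat.cast_nonneg (α := ℝ) M]
      · have e2 : g M y = 0 := by simp [hgdef, Set.indicator_of_notMem hy]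
        simp [hψdef, e2, Nat.cast_nonneg]
    · have e1 : g M x = 0 := by simp [hgdef, Set.indicator_of_notMem hx]
      simp [hψdef, e1, Nat.cast_nonneg]
  have hψle : ∀ M x y, |ψ M x y| ≤ |φ x y| := by
    intro M x y
    rcases hg01 M x with h | h <;> rcases hg01 M y with h' | h' <;>
      simp [hψdef, h, h', abs_nonneg, abs_mul]
  have hψsymm : ∀ M x y, ψ M x y = ψ M y x := by
    intro M x y
    simp only [hψdef]
    rw [hφsymm x y]; ring
  have hψPD : ∀ (M : ℕ) (ι : Type) (_ : Fintype ι) (c : ι → ℝ) (x : ι → X),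
      0 ≤ ∑ i, ∑ j, ψ M (x i) (x j) * c i * c j := by
    intro M ι hι c x
    have h := hφPD ι hι (fun i => c i * g M (x i)) x
    calc (0:ℝ) ≤ ∑ i, ∑ j, (L (x i) x₀ + L (x j) x₀ - L (x i) (x j) - L x₀ x₀)
          * (c i * g M (x i)) * (c j * g M (x j)) := h
      _ = ∑ i, ∑ j, ψ M (x i) (x j) * c i * c j := by
          refine Finset.sum_congr rfl fun i _ => Finset.sum_congr rfl fun j _ => ?_
          simp only [hψdef, hφdef]
          ring
  -- a.e. strong measurability of ψ M on products
  have hψaesm : ∀ (M : ℕ) (m1 m2 : Measure X),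
      Integrable (fun p : X × X => φ p.1 p.2) (m1.prod m2) →
      AEStronglyMeasurable (fun p : X × X => ψ M p.1 p.2) (m1.prod m2) := by
    intro M m1 m2 hφi
    have g1 : AEStronglyMeasurable (fun p : X × X => g M p.1) (m1.prod m2) :=
      ((hgmeas M).comp measurable_fst).aestronglyMeasurable
    have g2 : AEStronglyMeasurable (fun p : X × X => g M p.2) (m1.prod m2) :=
      ((hgmeas M).comp measurable_snd).aestronglyMeasurable
    exact (g1.mul g2).mul hφi.aestronglyMeasurable
  have hψint : ∀ (M : ℕ) (m1 m2 : Measure X) [IsProbabilityMeasure m1]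
      [IsProbabilityMeasure m2],
      Integrable (fun p : X × X => φ p.1 p.2) (m1.prod m2) →
      Integrable (fun p : X × X => ψ M p.1 p.2) (m1.prod m2) := by
    intro M m1 m2 _ _ hφi
    refine Integrable.mono' (integrable_const (M : ℝ)) (hψaesm M m1 m2 hφi) ?_
    exact Filter.Eventually.of_forall fun p => by
      rw [Real.norm_eq_abs]; exact hψb M p.1 p.2
  -- the key inequality for each truncation level
  have keyM : ∀ M : ℕ,
      0 ≤ (∫ p : X × X, ψ M p.1 p.2 ∂μ.prod μ) + (∫ p : X × X, ψ M p.1 p.2 ∂ν.prod ν)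
        - 2 * ∫ p : X × X, ψ M p.1 p.2 ∂μ.prod ν := by
    intro M
    have iψμμ := hψint M μ μ hφμμ
    have iψμν := hψint M μ ν hφμν
    have iψνν := hψint M ν ν hφνν
    have iψνμ := hψint M ν μ hφνμ
    set ρ₀ := μ.prod ν with hρ₀
    set K : (X × X) → (X × X) → ℝ :=
      fun u v => ψ M u.1 v.1 + ψ M u.2 v.2 - ψ M u.1 v.2 - ψ M u.2 v.1 with hKdef
    have hQ : ∀ (ι : Type) (_ : Fintype ι) (p : ι → X × X),
        0 ≤ ∑ i, ∑ j, K (p i) (p j) := by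
      intro ι hι p
      have h := hψPD M (ι ⊕ ι) inferInstance
        (Sum.elim (fun _ => (1:ℝ)) (fun _ => (-1:ℝ)))
        (Sum.elim (fun i => (p i).1) (fun i => (p i).2))
      calc (0:ℝ) ≤ _ := h
        _ = ∑ i, ∑ j, K (p i) (p j) := by
          simp only [Fintype.sum_sum_type, Sum.elim_inl, Sum.elim_inr,
            ← Finset.sum_add_distrib]
          refine Finset.sum_congr rfl fun i _ => Finset.sum_congr rfl fun j _ => ?_
          simp only [hKdef]
          ring
    have hDle : ∀ u : X × X, K u u ≤ (4 * M : ℝ) := by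
      intro u
      have b11 := abs_le.1 (hψb M u.1 u.1)
      have b22 := abs_le.1 (hψb M u.2 u.2)
      have b12 := abs_le.1 (hψb M u.1 u.2)
      have b21 := abs_le.1 (hψb M u.2 u.1)
      simp only [hKdef]
      linarith [b11.2, b22.2, b12.1, b21.1]
    -- integrability of K
    have hmap11 := map_pair ρ₀ ρ₀ Prod.fst Prod.fst measurable_fst measurable_fst μ μ
      (map_fst_prob μ ν) (map_fst_prob μ ν)
    have hmap22 := map_pair ρ₀ ρ₀ Prod.snd Prod.snd measurable_snd measurable_snd ν ν
      (map_snd_prob μ ν) (map_snd_prob μ ν)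
    have hmap12 := map_pair ρ₀ ρ₀ Prod.fst Prod.snd measurable_fst measurable_snd μ ν
      (map_fst_prob μ ν) (map_snd_prob μ ν)
    have hmap21 := map_pair ρ₀ ρ₀ Prod.snd Prod.fst measurable_snd measurable_fst ν μ
      (map_snd_prob μ ν) (map_fst_prob μ ν)
    have t11 : Integrable (fun q : (X × X) × (X × X) => ψ M q.1.1 q.2.1) (ρ₀.prod ρ₀) :=
      integrable_comp_proj _ (measurable_fst.prodMap measurable_fst) _ _ hmap11 _ iψμμ
    have t22 : Integrable (fun q : (X × X) × (X × X) => ψ M q.1.2 q.2.2) (ρ₀.prod ρ₀) :=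
      integrable_comp_proj _ (measurable_snd.prodMap measurable_snd) _ _ hmap22 _ iψνν
    have t12 : Integrable (fun q : (X × X) × (X × X) => ψ M q.1.1 q.2.2) (ρ₀.prod ρ₀) :=
      integrable_comp_proj _ (measurable_fst.prodMap measurable_snd) _ _ hmap12 _ iψμν
    have t21 : Integrable (fun q : (X × X) × (X × X) => ψ M q.1.2 q.2.1) (ρ₀.prod ρ₀) :=
      integrable_comp_proj _ (measurable_snd.prodMap measurable_fst) _ _ hmap21 _ iψνμ
    have hKint : Integrable (fun q : (X × X) × (X × X) => K q.1 q.2) (ρ₀.prod ρ₀) := by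
      simpa [hKdef, Pi.add_def, Pi.sub_def] using ((t11.add t22).sub t12).sub t21
    -- value of ∫ K
    have e11 : ∫ q : (X × X) × (X × X), ψ M q.1.1 q.2.1 ∂ρ₀.prod ρ₀
        = ∫ p : X × X, ψ M p.1 p.2 ∂μ.prod μ :=
      integral_comp_proj _ (measurable_fst.prodMap measurable_fst) _ _ hmap11 _ iψμμ.1
    have e22 : ∫ q : (X × X) × (X × X), ψ M q.1.2 q.2.2 ∂ρ₀.prod ρ₀
        = ∫ p : X × X, ψ M p.1 p.2 ∂ν.prod ν :=
      integral_comp_proj _ (measurable_snd.prodMap measurable_snd) _ _ hmap22 _ iψνν.1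
    have e12 : ∫ q : (X × X) × (X × X), ψ M q.1.1 q.2.2 ∂ρ₀.prod ρ₀
        = ∫ p : X × X, ψ M p.1 p.2 ∂μ.prod ν :=
      integral_comp_proj _ (measurable_fst.prodMap measurable_snd) _ _ hmap12 _ iψμν.1
    have e21' : ∫ q : (X × X) × (X × X), ψ M q.1.2 q.2.1 ∂ρ₀.prod ρ₀
        = ∫ p : X × X, ψ M p.1 p.2 ∂ν.prod μ :=
      integral_comp_proj _ (measurable_snd.prodMap measurable_fst) _ _ hmap21 _ iψνμ.1
    have hswapψ : ∫ p : X × X, ψ M p.1 p.2 ∂ν.prod μ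
        = ∫ p : X × X, ψ M p.1 p.2 ∂μ.prod ν := by
      have h := integral_prod_swap (μ := μ) (ν := ν) (fun p : X × X => ψ M p.1 p.2)
      have heq : (fun p : X × X => ψ M p.2 p.1) = fun p : X × X => ψ M p.1 p.2 :=
        funext fun p => hψsymm M p.2 p.1
      calc ∫ p : X × X, ψ M p.1 p.2 ∂ν.prod μ
          = ∫ p : X × X, ψ M p.2 p.1 ∂ν.prod μ := by rw [heq]
        _ = ∫ p : X × X, ψ M p.1 p.2 ∂μ.prod ν := h
    have hKval : ∫ q : (X × X) × (X × X), K q.1 q.2 ∂ρ₀.prod ρ₀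
        = (∫ p : X × X, ψ M p.1 p.2 ∂μ.prod μ) + (∫ p : X × X, ψ M p.1 p.2 ∂ν.prod ν)
          - 2 * ∫ p : X × X, ψ M p.1 p.2 ∂μ.prod ν := by
      have hfun : (fun q : (X × X) × (X × X) => K q.1 q.2)
          = fun q => ψ M q.1.1 q.2.1 + ψ M q.1.2 q.2.2 - ψ M q.1.1 q.2.2
            - ψ M q.1.2 q.2.1 := by
        funext q; simp [hKdef]
      have j1 : Integrable (fun q : (X × X) × (X × X) => ψ M q.1.1 q.2.1 + ψ M q.1.2 q.2.2)
          (ρ₀.prod ρ₀) := t11.add t22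
      have j2 : Integrable
          (fun q : (X × X) × (X × X) => ψ M q.1.1 q.2.1 + ψ M q.1.2 q.2.2 - ψ M q.1.1 q.2.2)
          (ρ₀.prod ρ₀) := j1.sub t12
      rw [hfun, integral_sub j2 t21, integral_sub j1 t12, integral_add t11 t22,
        e11, e22, e12, e21', hswapψ]
      ring
    -- apply the doubling bound for every n, then let n → ∞
    set E := (∫ p : X × X, ψ M p.1 p.2 ∂μ.prod μ) + (∫ p : X × X, ψ M p.1 p.2 ∂ν.prod ν)
      - 2 * ∫ p : X × X, ψ M p.1 p.2 ∂μ.prod ν with hE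
    have keyn : ∀ n : ℕ, 0 ≤ ((2:ℝ)^(n+1) - 1) * E + 4 * M := by
      intro n
      have h := energy_lower_bound n ρ₀ K (fun _ => (4 * M : ℝ)) hQ hDle hKint
        (integrable_const _)
      rw [hKval] at h
      simpa [hE] using h
    by_contra hcon
    push_neg at hcon
    rw [hE] at hcon
    have hEneg : E < 0 := by rw [hE]; linarith
    obtain ⟨n, hn⟩ := exists_nat_gt ((4 * M : ℝ) / (-E))
    have hpos : (0:ℝ) < -E := by linarith
    rw [div_lt_iff₀ hpos] at hn
    have h3 : (n:ℝ) < 2^n := by exact_mod_cast (Nat.lt_two_pow_self (n := n))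
    have h4 : (1:ℝ) ≤ 2^n := by
      have : (2:ℝ)^0 ≤ 2^n := pow_le_pow_right₀ (by norm_num) (Nat.zero_le n)
      simpa using this
    have h5 : (2:ℝ)^(n+1) = 2*2^n := by ring
    have hcoef : (n:ℝ) < 2^(n+1) - 1 := by rw [h5]; linarith
    have key := keyn n
    nlinarith [key, hcoef, hn, hEneg, mul_pos (sub_pos.2 hcoef) hpos]
  -- dominated convergence as M → ∞
  have hlim : ∀ (m1 m2 : Measure X) [IsProbabilityMeasure m1] [IsProbabilityMeasure m2],
      Integrable (fun p : X × X => φ p.1 p.2) (m1.prod m2) →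
      Filter.Tendsto (fun M : ℕ => ∫ p : X × X, ψ M p.1 p.2 ∂m1.prod m2)
        Filter.atTop (nhds (∫ p : X × X, φ p.1 p.2 ∂m1.prod m2)) := by
    intro m1 m2 _ _ hφi
    refine tendsto_integral_of_dominated_convergence (fun p => |φ p.1 p.2|)
      (fun M => hψaesm M m1 m2 hφi) hφi.abs
      (fun M => Filter.Eventually.of_forall fun p => ?_)
      (Filter.Eventually.of_forall fun p => ?_)
    · rw [Real.norm_eq_abs]; exact hψle M p.1 p.2
    · obtain ⟨N, hN⟩ := exists_nat_ge (max (φ p.1 p.1) (φ p.2 p.2))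
      have hev : (fun _ : ℕ => φ p.1 p.2) =ᶠ[Filter.atTop] fun M => ψ M p.1 p.2 := by
        refine Filter.eventually_atTop.2 ⟨N, fun M hM => ?_⟩
        have hx : p.1 ∈ A M := by
          have : φ p.1 p.1 ≤ (N:ℝ) := le_trans (le_max_left _ _) hN
          have hNM : (N:ℝ) ≤ (M:ℝ) := by exact_mod_cast hM
          exact le_trans this hNM
        have hy : p.2 ∈ A M := by
          have : φ p.2 p.2 ≤ (N:ℝ) := le_trans (le_max_right _ _) hN
          have hNM : (N:ℝ) ≤ (M:ℝ) := by exact_mod_cast hM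
          exact le_trans this hNM
        have e1 : g M p.1 = 1 := by simp [hgdef, Set.indicator_of_mem hx]
        have e2 : g M p.2 = 1 := by simp [hgdef, Set.indicator_of_mem hy]
        simp [hψdef, e1, e2]
      exact Filter.Tendsto.congr' hev tendsto_const_nhds
  have tendA := hlim μ μ hφμμ
  have tendB := hlim ν ν hφνν
  have tendC := hlim μ ν hφμν
  have tendall : Filter.Tendsto
      (fun M : ℕ => (∫ p : X × X, ψ M p.1 p.2 ∂μ.prod μ)
        + (∫ p : X × X, ψ M p.1 p.2 ∂ν.prod ν)
        - 2 * ∫ p : X × X, ψ M p.1 p.2 ∂μ.prod ν)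
      Filter.atTop
      (nhds ((∫ p : X × X, φ p.1 p.2 ∂μ.prod μ) + (∫ p : X × X, φ p.1 p.2 ∂ν.prod ν)
        - 2 * ∫ p : X × X, φ p.1 p.2 ∂μ.prod ν)) :=
    (tendA.add tendB).sub (tendC.const_mul 2)
  have hφfinal : 0 ≤ (∫ p : X × X, φ p.1 p.2 ∂μ.prod μ)
      + (∫ p : X × X, φ p.1 p.2 ∂ν.prod ν)
      - 2 * ∫ p : X × X, φ p.1 p.2 ∂μ.prod ν :=
    ge_of_tendsto' tendall keyM
  -- evaluate the φ-integrals
  have evμμ := prod_integral_decomp μ μ L (fun x => L x x₀) (L x₀ x₀) hμμ hgLμ hgLμ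
  have evνν := prod_integral_decomp ν ν L (fun x => L x x₀) (L x₀ x₀) hνν hgLν hgLν
  have evμν := prod_integral_decomp μ ν L (fun x => L x x₀) (L x₀ x₀) hμν hgLμ hgLν
  have eφμμ : ∫ p : X × X, φ p.1 p.2 ∂μ.prod μ
      = (∫ x, L x x₀ ∂μ) + (∫ x, L x x₀ ∂μ) - (∫ p : X × X, L p.1 p.2 ∂μ.prod μ)
        - L x₀ x₀ := evμμ
  have eφνν : ∫ p : X × X, φ p.1 p.2 ∂ν.prod ν
      = (∫ x, L x x₀ ∂ν) + (∫ x, L x x₀ ∂ν) - (∫ p : X × X, L p.1 p.2 ∂ν.prod ν)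
        - L x₀ x₀ := evνν
  have eφμν : ∫ p : X × X, φ p.1 p.2 ∂μ.prod ν
      = (∫ x, L x x₀ ∂μ) + (∫ x, L x x₀ ∂ν) - (∫ p : X × X, L p.1 p.2 ∂μ.prod ν)
        - L x₀ x₀ := evμν
  rw [eφμμ, eφνν, eφμν] at hφfinal
  linarith
end

section
/- For 0 < r < 2 and x ∈ ℝ^n, ‖x‖^r = c_r ∫_{ℝ^n} (1 − cos⟨t,x⟩)/‖t‖^{n+r} dt, where c_r is a positive constant depending only on n and r (in particular the integral is finite and proportional to ‖x‖^r). -/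
open MeasureTheory

section Helpers

open Real Set Metric
open scoped ENNReal NNReal


private lemma radial_integrable' {n : ℕ} (hn : 0 < n) {f : ℝ → ℝ}
    (hf : IntegrableOn (fun y => y ^ (n - 1) * f y) (Ioi (0:ℝ))) :
    Integrable (fun x : EuclideanSpace ℝ (Fin n) => f ‖x‖) := by
  haveI : Nonempty (Fin n) := ⟨⟨0, hn⟩⟩
  set E := EuclideanSpace ℝ (Fin n) with hE
  have hdim : Module.finrank ℝ E = n := finrank_euclideanSpace_fin
  have h1 : Integrable (fun y : Ioi (0:ℝ) => f y.1) (Measure.volumeIoiPow (n - 1)) := by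
    rw [Measure.volumeIoiPow, integrable_withDensity_iff (by fun_prop)
      (Filter.Eventually.of_forall fun y => ENNReal.ofReal_lt_top)]
    have : (fun y : Ioi (0:ℝ) => f y.1 * (ENNReal.ofReal (y.1 ^ (n-1))).toReal)
        = (fun z => z ^ (n-1) * f z) ∘ (Subtype.val : Ioi (0:ℝ) → ℝ) := by
      funext y
      simp only [Function.comp_apply]
      rw [ENNReal.toReal_ofReal (pow_nonneg (le_of_lt y.2) _)]
      ring
    rw [this, ← (MeasurableEmbedding.subtype_coe measurableSet_Ioi).integrable_map_iff,
      map_comap_subtype_coe measurableSet_Ioi]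
    exact hf
  have h2 : Integrable (fun p : sphere (0:E) 1 × Ioi (0:ℝ) => f p.2.1)
      ((volume : Measure E).toSphere.prod (Measure.volumeIoiPow (Module.finrank ℝ E - 1))) := by
    rw [hdim]
    have := (integrable_const (1:ℝ) (μ := (volume : Measure E).toSphere)).smul_prod h1
    simpa using this
  have h3 := ((volume : Measure E).measurePreserving_homeomorphUnitSphereProd.integrable_comp_emb
      (Homeomorph.measurableEmbedding _)).2 h2
  have h4 : Integrable ((fun x : E => f ‖x‖) ∘ (Subtype.val : ({0}ᶜ : Set E) → E))
      ((volume : Measure E).comap Subtype.val) := by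
    convert h3 using 1
    funext x
    simp
  rw [← (MeasurableEmbedding.subtype_coe (measurableSet_singleton (0:E)).compl).integrable_map_iff,
      map_comap_subtype_coe (measurableSet_singleton (0:E)).compl,
      restrict_compl_singleton] at h4
  exact h4

private lemma integrableOn_norm_rpow_ball' {n : ℕ} (hn : 0 < n) {s : ℝ} (hs : -(n:ℝ) < s) :
    IntegrableOn (fun t : EuclideanSpace ℝ (Fin n) => ‖t‖ ^ s)
      (ball (0 : EuclideanSpace ℝ (Fin n)) 1) := by
  set F : ℝ → ℝ := fun y => if y < 1 then y ^ s else 0 with hF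
  have hIoi : IntegrableOn (fun y => y ^ (n - 1) * F y) (Ioi (0:ℝ)) := by
    have base : IntegrableOn (fun y : ℝ => y ^ ((n:ℝ) - 1 + s)) (Ioo (0:ℝ) 1) := by
      have := (intervalIntegral.intervalIntegrable_rpow' (a := (0:ℝ)) (b := 1)
        (r := (n:ℝ) - 1 + s) (by linarith))
      rw [intervalIntegrable_iff_integrableOn_Ioc_of_le zero_le_one] at this
      exact this.mono_set Ioo_subset_Ioc_self
    have hind : Integrable ((Ioo (0:ℝ) 1).indicator fun y => y ^ ((n:ℝ) - 1 + s)) :=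
      (integrable_indicator_iff measurableSet_Ioo).2 base
    refine (hind.integrableOn (s := Ioi 0)).congr_fun ?_ measurableSet_Ioi
    intro y hy
    have hy0 : (0:ℝ) < y := hy
    by_cases h1 : y < 1
    · rw [indicator_of_mem (mem_Ioo.mpr ⟨hy0, h1⟩)]
      have e1 : y ^ ((n:ℝ) - 1 + s) = y ^ ((n:ℝ) - 1) * y ^ s := rpow_add hy0 _ _
      have e2 : y ^ ((n:ℝ) - 1) = y ^ (n - 1) := by
        rw [← rpow_natCast y (n-1)]
        congr 1
        push_cast [hn]
        ring
      rw [e1, e2, hF]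
      simp [h1]
    · rw [indicator_of_notMem (by simp [h1, mem_Ioo])]
      simp [hF, h1]
  have key := radial_integrable' hn hIoi
  have heq : (ball (0 : EuclideanSpace ℝ (Fin n)) 1).indicator
      (fun t : EuclideanSpace ℝ (Fin n) => ‖t‖ ^ s) = fun x => F ‖x‖ := by
    funext t
    by_cases h : ‖t‖ < 1
    · rw [indicator_of_mem (mem_ball_zero_iff.mpr h)]
      simp [hF, h]
    · rw [indicator_of_notMem (fun hc => h (mem_ball_zero_iff.mp hc))]
      simp [hF, h]
  exact (integrable_indicator_iff measurableSet_ball).1 (heq ▸ key)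

private lemma integrableOn_norm_rpow_compl' {n : ℕ} (hn : 0 < n) {s : ℝ} (hs : s < -(n:ℝ)) :
    IntegrableOn (fun t : EuclideanSpace ℝ (Fin n) => ‖t‖ ^ s)
      (ball (0 : EuclideanSpace ℝ (Fin n)) 1)ᶜ := by
  set F : ℝ → ℝ := fun y => if y < 1 then 0 else y ^ s with hF
  have hIoi : IntegrableOn (fun y => y ^ (n - 1) * F y) (Ioi (0:ℝ)) := by
    have base : IntegrableOn (fun y : ℝ => y ^ ((n:ℝ) - 1 + s)) (Ioi (1:ℝ)) :=
      integrableOn_Ioi_rpow_of_lt (by push_cast; linarith) one_pos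
    have base' : IntegrableOn (fun y : ℝ => y ^ ((n:ℝ) - 1 + s)) (Ici (1:ℝ)) := by
      rwa [integrableOn_Ici_iff_integrableOn_Ioi]
    have hind : Integrable ((Ici (1:ℝ)).indicator fun y => y ^ ((n:ℝ) - 1 + s)) :=
      (integrable_indicator_iff measurableSet_Ici).2 base'
    refine (hind.integrableOn (s := Ioi 0)).congr_fun ?_ measurableSet_Ioi
    intro y hy
    have hy0 : (0:ℝ) < y := hy
    by_cases h1 : y < 1
    · rw [indicator_of_notMem (by simpa using h1)]
      simp [hF, h1]
    · rw [indicator_of_mem (by simpa using not_lt.1 h1)]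
      have e1 : y ^ ((n:ℝ) - 1 + s) = y ^ ((n:ℝ) - 1) * y ^ s := rpow_add hy0 _ _
      have e2 : y ^ ((n:ℝ) - 1) = y ^ (n - 1) := by
        rw [← rpow_natCast y (n-1)]
        congr 1
        push_cast [hn]
        ring
      rw [e1, e2, hF]
      simp [h1]
  have key := radial_integrable' hn hIoi
  have heq : (ball (0 : EuclideanSpace ℝ (Fin n)) 1)ᶜ.indicator
      (fun t : EuclideanSpace ℝ (Fin n) => ‖t‖ ^ s) = fun x => F ‖x‖ := by
    funext t
    by_cases h : ‖t‖ < 1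
    · rw [indicator_of_notMem (by simpa [mem_ball_zero_iff] using h)]
      simp [hF, h]
    · rw [indicator_of_mem (by simpa [mem_ball_zero_iff] using h)]
      simp [hF, h]
  exact (integrable_indicator_iff measurableSet_ball.compl).1 (heq ▸ key)

private lemma integrable_kernel' {n : ℕ} (hn : 0 < n) {r : ℝ} (hr0 : 0 < r) (hr2 : r < 2)
    (x : EuclideanSpace ℝ (Fin n)) :
    Integrable (fun t : EuclideanSpace ℝ (Fin n) =>
      (1 - Real.cos (inner ℝ t x : ℝ)) / ‖t‖ ^ ((n : ℝ) + r)) := by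
  set p : ℝ := (n : ℝ) + r with hp
  have hg1 : IntegrableOn (fun t : EuclideanSpace ℝ (Fin n) => ‖t‖ ^ (2 - p))
      (ball (0 : EuclideanSpace ℝ (Fin n)) 1) :=
    integrableOn_norm_rpow_ball' hn (by rw [hp]; linarith)
  have hg2 : IntegrableOn (fun t : EuclideanSpace ℝ (Fin n) => ‖t‖ ^ (-p))
      (ball (0 : EuclideanSpace ℝ (Fin n)) 1)ᶜ :=
    integrableOn_norm_rpow_compl' hn (by rw [hp]; linarith)
  have hgint : Integrable (fun t : EuclideanSpace ℝ (Fin n) =>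
      ‖x‖ ^ 2 / 2 * (ball (0 : EuclideanSpace ℝ (Fin n)) 1).indicator
        (fun t => ‖t‖ ^ (2 - p)) t
      + 2 * (ball (0 : EuclideanSpace ℝ (Fin n)) 1)ᶜ.indicator (fun t => ‖t‖ ^ (-p)) t) :=
    ((((integrable_indicator_iff measurableSet_ball).2 hg1).const_mul _).add
      (((integrable_indicator_iff measurableSet_ball.compl).2 hg2).const_mul 2))
  refine hgint.mono' ?_ (Filter.Eventually.of_forall fun t => ?_)
  · apply Measurable.aestronglyMeasurable
    apply Measurable.div
    · exact (continuous_const.sub (Real.continuous_cos.comp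
        ((continuous_id.inner continuous_const)))).measurable
    · fun_prop
  · have hc1 : Real.cos (inner ℝ t x : ℝ) ≤ 1 := Real.cos_le_one _
    have hden : (0:ℝ) ≤ ‖t‖ ^ p := rpow_nonneg (norm_nonneg t) p
    rw [Real.norm_of_nonneg (div_nonneg (by linarith) hden)]
    by_cases ht : ‖t‖ < 1
    · have hmem : t ∉ (ball (0 : EuclideanSpace ℝ (Fin n)) 1)ᶜ :=
        not_not_intro (mem_ball_zero_iff.2 ht)
      rw [indicator_of_mem (mem_ball_zero_iff.2 ht), indicator_of_notMem hmem,
        mul_zero, add_zero]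
      rcases eq_or_ne t 0 with h0 | h0
      · rw [h0]
        simp only [inner_zero_left, Real.cos_zero, sub_self, zero_div]
        positivity
      · have htpos : 0 < ‖t‖ := norm_pos_iff.2 h0
        have hppos : 0 < ‖t‖ ^ p := rpow_pos_of_pos htpos p
        rw [div_le_iff₀ hppos, mul_assoc]
        have hA : ‖t‖ ^ ((2:ℝ) - p) * ‖t‖ ^ p = ‖t‖ ^ (2:ℕ) := by
          rw [← rpow_natCast ‖t‖ 2, ← rpow_add htpos]
          norm_num
        rw [hA]
        have hθ : |(inner ℝ t x : ℝ)| ≤ ‖t‖ * ‖x‖ := abs_real_inner_le_norm t x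
        have h1 : 1 - Real.cos (inner ℝ t x : ℝ) ≤ (inner ℝ t x : ℝ) ^ 2 / 2 := by
          have := Real.one_sub_sq_div_two_le_cos (x := (inner ℝ t x : ℝ))
          linarith
        have h2 : (inner ℝ t x : ℝ) ^ 2 ≤ (‖t‖ * ‖x‖) ^ 2 := by
          rw [← sq_abs]
          exact pow_le_pow_left₀ (abs_nonneg _) hθ 2
        nlinarith [sq_nonneg (‖t‖ * ‖x‖)]
    · have hmem : t ∈ (ball (0 : EuclideanSpace ℝ (Fin n)) 1)ᶜ :=
        fun hc => ht (mem_ball_zero_iff.1 hc)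
      rw [indicator_of_notMem (fun hc => ht (mem_ball_zero_iff.1 hc)),
        indicator_of_mem hmem, mul_zero, zero_add]
      have htpos : (0:ℝ) < ‖t‖ := lt_of_lt_of_le one_pos (not_lt.1 ht)
      have hppos : 0 < ‖t‖ ^ p := rpow_pos_of_pos htpos p
      rw [rpow_neg (norm_nonneg t), ← div_eq_mul_inv, div_le_div_iff₀ hppos hppos]
      have hcm1 : -1 ≤ Real.cos (inner ℝ t x : ℝ) := Real.neg_one_le_cos _
      nlinarith

/-- For `0 < r < 2` there is a constant `c = c(n,r) > 0` such that for all
`x ∈ ℝ^n` the integrand `t ↦ (1 − cos⟨t,x⟩)/‖t‖^{n+r}` is integrable and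
`∫_{ℝ^n} (1 − cos⟨t,x⟩)/‖t‖^{n+r} dt = c ‖x‖^r`. -/
theorem integral_one_sub_cos_inner (n : ℕ) (r : ℝ) (hr0 : 0 < r) (hr2 : r < 2) :
    ∃ c : ℝ, 0 < c ∧ ∀ x : EuclideanSpace ℝ (Fin n),
      Integrable (fun t : EuclideanSpace ℝ (Fin n) =>
        (1 - Real.cos (inner ℝ t x : ℝ)) / ‖t‖ ^ ((n : ℝ) + r)) ∧
      (∫ t : EuclideanSpace ℝ (Fin n),
          (1 - Real.cos (inner ℝ t x : ℝ)) / ‖t‖ ^ ((n : ℝ) + r)) = c * ‖x‖ ^ r := by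
  rcases Nat.eq_zero_or_pos n with hn | hn
  · subst hn
    refine ⟨1, one_pos, fun x => ?_⟩
    have hx0 : x = 0 := Subsingleton.elim x 0
    have hfun : ∀ t : EuclideanSpace ℝ (Fin 0),
        (1 - Real.cos (inner ℝ t x : ℝ)) / ‖t‖ ^ (((0:ℕ) : ℝ) + r) = 0 := by
      intro t
      rw [hx0]
      simp
    constructor
    · exact (integrable_zero _ _ _).congr
        (Filter.Eventually.of_forall fun t => (hfun t).symm)
    · rw [integral_eq_zero_of_ae (Filter.Eventually.of_forall hfun), hx0, norm_zero,
        Real.zero_rpow hr0.ne', mul_zero]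
  · haveI : Nonempty (Fin n) := ⟨⟨0, hn⟩⟩
    set p : ℝ := (n : ℝ) + r with hp
    set e : EuclideanSpace ℝ (Fin n) := EuclideanSpace.single ⟨0, hn⟩ 1 with he
    have hne : ‖e‖ = 1 := by
      rw [he, EuclideanSpace.norm_single]
      norm_num
    set c : ℝ := ∫ t : EuclideanSpace ℝ (Fin n),
        (1 - Real.cos (inner ℝ t e : ℝ)) / ‖t‖ ^ p with hc
    have hnonneg : ∀ (y : EuclideanSpace ℝ (Fin n))
        (t : EuclideanSpace ℝ (Fin n)), 0 ≤ (1 - Real.cos (inner ℝ t y : ℝ)) / ‖t‖ ^ p :=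
      fun y t => div_nonneg (by linarith [Real.cos_le_one (inner ℝ t y : ℝ)])
        (rpow_nonneg (norm_nonneg t) p)
    have hcpos : 0 < c := by
      rw [hc]
      refine (integral_pos_iff_support_of_nonneg (hnonneg e)
        (integrable_kernel' hn hr0 hr2 e)).2 ?_
      set V : Set (EuclideanSpace ℝ (Fin n)) :=
        (fun t : EuclideanSpace ℝ (Fin n) => (inner ℝ t e : ℝ)) ⁻¹' Ioo 0 1 with hV
      have hVopen : IsOpen V := isOpen_Ioo.preimage (continuous_id.inner continuous_const)
      have hVne : V.Nonempty := by
        refine ⟨(1/2 : ℝ) • e, ?_⟩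
        have : (inner ℝ ((1/2 : ℝ) • e) e : ℝ) = 1/2 := by
          rw [real_inner_smul_left, real_inner_self_eq_norm_sq, hne]
          norm_num
        simp only [hV, mem_preimage, this, mem_Ioo]
        norm_num
      have hsub : V ⊆ Function.support
          (fun t => (1 - Real.cos (inner ℝ t e : ℝ)) / ‖t‖ ^ p) := by
        intro t ht
        obtain ⟨h0, h1⟩ := ht
        have htne : t ≠ 0 := by
          intro h
          rw [h] at h0
          simp at h0
        have hcos : Real.cos (inner ℝ t e : ℝ) < 1 := by
          refine lt_of_le_of_ne (Real.cos_le_one _) (fun hEq => ?_)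
          have hpi := Real.pi_gt_three
          have := (Real.cos_eq_one_iff_of_lt_of_lt
            (show -(2 * π) < (inner ℝ t e : ℝ) by linarith)
            (show (inner ℝ t e : ℝ) < 2 * π by linarith)).1 hEq
          linarith
        apply Function.mem_support.2
        exact ne_of_gt (div_pos (by linarith) (rpow_pos_of_pos (norm_pos_iff.2 htne) p))
      calc (0:ℝ≥0∞) < volume V := hVopen.measure_pos volume hVne
        _ ≤ _ := measure_mono hsub
    refine ⟨c, hcpos, fun x => ⟨integrable_kernel' hn hr0 hr2 x, ?_⟩⟩
    rcases eq_or_ne x 0 with hx | hx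
    · subst hx
      have hfun : (fun t : EuclideanSpace ℝ (Fin n) =>
          (1 - Real.cos (inner ℝ t (0 : EuclideanSpace ℝ (Fin n)) : ℝ)) / ‖t‖ ^ p)
          = fun _ => 0 := by
        funext t
        simp
      rw [hfun, integral_zero, norm_zero, Real.zero_rpow hr0.ne', mul_zero]
    · have hxpos : 0 < ‖x‖ := norm_pos_iff.2 hx
      set u : EuclideanSpace ℝ (Fin n) := ‖x‖⁻¹ • x with hu
      have hnu : ‖u‖ = 1 := norm_smul_inv_norm hx
      set R := Submodule.reflection (ℝ ∙ (e - u))ᗮ with hR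
      have hRe : R e = u := Submodule.reflection_sub (by rw [hne, hnu])
      have hRu : R u = e := by rw [← hRe, hR, Submodule.reflection_reflection]
      have hRx : R x = ‖x‖ • e := by
        have hx' : x = ‖x‖ • u := by rw [hu, smul_smul, mul_inv_cancel₀ hxpos.ne', one_smul]
        conv_lhs => rw [hx']
        rw [R.map_smul, hRu]
      have step1 : (∫ t : EuclideanSpace ℝ (Fin n),
          (1 - Real.cos (inner ℝ t x : ℝ)) / ‖t‖ ^ p)
          = ∫ s : EuclideanSpace ℝ (Fin n),
            (1 - Real.cos (inner ℝ s (‖x‖ • e) : ℝ)) / ‖s‖ ^ p := by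
        rw [← MeasureTheory.integral_comp R
          (fun t => (1 - Real.cos (inner ℝ t x : ℝ)) / ‖t‖ ^ p)]
        congr 1
        funext s
        rw [R.norm_map]
        congr 3
        calc (inner ℝ (R s) x : ℝ) = (inner ℝ (R s) (R (R x)) : ℝ) := by
              rw [hR, Submodule.reflection_reflection]
          _ = (inner ℝ s (R x) : ℝ) := R.inner_map_map s (R x)
          _ = (inner ℝ s (‖x‖ • e) : ℝ) := by rw [hRx]
      have step2 : ∀ s : EuclideanSpace ℝ (Fin n),
          (1 - Real.cos (inner ℝ s (‖x‖ • e) : ℝ)) / ‖s‖ ^ p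
          = ‖x‖ ^ p * ((1 - Real.cos (inner ℝ (‖x‖ • s) e : ℝ)) / ‖(‖x‖ • s)‖ ^ p) := by
        intro s
        have h1 : (inner ℝ s (‖x‖ • e) : ℝ) = (inner ℝ (‖x‖ • s) e : ℝ) := by
          rw [real_inner_smul_right, real_inner_smul_left]
        have h2 : ‖(‖x‖ • s)‖ ^ p = ‖x‖ ^ p * ‖s‖ ^ p := by
          rw [norm_smul, Real.norm_eq_abs, abs_of_pos hxpos,
            Real.mul_rpow (norm_nonneg x) (norm_nonneg s)]
        rw [h1, h2, mul_comm (‖x‖ ^ p) (‖s‖ ^ p), div_mul_eq_div_div, mul_div_assoc',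
          mul_div_cancel_left₀ _ (ne_of_gt (rpow_pos_of_pos hxpos p))]
      have hfr : Module.finrank ℝ (EuclideanSpace ℝ (Fin n)) = n := finrank_euclideanSpace_fin
      have hsplit : ‖x‖ ^ p = ‖x‖ ^ (n:ℕ) * ‖x‖ ^ r := by
        rw [hp, ← rpow_natCast ‖x‖ n, ← rpow_add hxpos]
      have hpowpos : (0:ℝ) < ‖x‖ ^ (n:ℕ) := pow_pos hxpos n
      calc (∫ t : EuclideanSpace ℝ (Fin n), (1 - Real.cos (inner ℝ t x : ℝ)) / ‖t‖ ^ p)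
          = ∫ s : EuclideanSpace ℝ (Fin n),
              (1 - Real.cos (inner ℝ s (‖x‖ • e) : ℝ)) / ‖s‖ ^ p := step1
        _ = ∫ s : EuclideanSpace ℝ (Fin n),
              ‖x‖ ^ p * ((1 - Real.cos (inner ℝ (‖x‖ • s) e : ℝ)) / ‖(‖x‖ • s)‖ ^ p) := by
            simp only [step2]
        _ = ‖x‖ ^ p * ∫ s : EuclideanSpace ℝ (Fin n),
              (1 - Real.cos (inner ℝ (‖x‖ • s) e : ℝ)) / ‖(‖x‖ • s)‖ ^ p :=
            integral_const_mul _ _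
        _ = ‖x‖ ^ p * (|((‖x‖ ^ Module.finrank ℝ (EuclideanSpace ℝ (Fin n)))⁻¹)| •
              ∫ t : EuclideanSpace ℝ (Fin n), (1 - Real.cos (inner ℝ t e : ℝ)) / ‖t‖ ^ p) := by
            rw [Measure.integral_comp_smul volume
              (fun t : EuclideanSpace ℝ (Fin n) => (1 - Real.cos (inner ℝ t e : ℝ)) / ‖t‖ ^ p) ‖x‖]
        _ = ‖x‖ ^ p * ((‖x‖ ^ (n:ℕ))⁻¹ * c) := by
            rw [hfr, smul_eq_mul, ← hc, abs_of_pos (inv_pos.2 hpowpos)]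
        _ = c * ‖x‖ ^ r := by
            rw [hsplit]
            field_simp

end Helpers
end

section
/- Let X, Y be random compact convex sets in ℝ^d (random elements of the space of nonempty compact convex sets with the Borel σ-algebra from the Hausdorff metric) and let (u_n)_{n∈ℕ} be a dense sequence in S^{d-1}. If for every finite index set I ⊆ ℕ the random vectors (h(X,u_i))_{i∈I} and (h(Y,u_i))_{i∈I} have the same distribution, then X and Y have the same distribution. -/
open MeasureTheory

/-- The space of nonempty compact convex subsets of ℝ^d with the Hausdorff metric
(inherited from `NonemptyCompacts`). -/
abbrev ConvexCompacts (d : ℕ) :=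
  {K : TopologicalSpace.NonemptyCompacts (EuclideanSpace ℝ (Fin d)) //
    Convex ℝ (K : Set (EuclideanSpace ℝ (Fin d)))}

/-- The support function of a compact convex set evaluated at `u`. -/
noncomputable def suppFn {d : ℕ} (K : ConvexCompacts d)
    (u : EuclideanSpace ℝ (Fin d)) : ℝ :=
  sSup ((fun y => (inner ℝ u y : ℝ)) '' (K : Set (EuclideanSpace ℝ (Fin d))))

open Metric Set

section Aux
variable {d : ℕ}
local notation "E" => EuclideanSpace ℝ (Fin d)

lemma cc_compact (K : ConvexCompacts d) : IsCompact (K : Set E) := K.1.isCompact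
lemma cc_nonempty (K : ConvexCompacts d) : (K : Set E).Nonempty := K.1.nonempty

lemma bddAbove_inner (K : ConvexCompacts d) (v : E) :
    BddAbove ((fun y => (inner ℝ v y : ℝ)) '' (K : Set E)) :=
  ((cc_compact K).image (continuous_const.inner continuous_id)).bddAbove

lemma inner_le_suppFn (K : ConvexCompacts d) (v : E) {x : E} (hx : x ∈ (K : Set E)) :
    (inner ℝ v x : ℝ) ≤ suppFn K v :=
  le_csSup (bddAbove_inner K v) (mem_image_of_mem _ hx)

lemma suppFn_le (K : ConvexCompacts d) (v : E) {c : ℝ}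
    (h : ∀ x ∈ (K : Set E), (inner ℝ v x : ℝ) ≤ c) : suppFn K v ≤ c :=
  csSup_le ((cc_nonempty K).image _) (by rintro _ ⟨x, hx, rfl⟩; exact h x hx)

lemma hausdorffEdist_ne_top (K L : ConvexCompacts d) :
    EMetric.hausdorffEdist (K : Set E) (L : Set E) ≠ ⊤ :=
  hausdorffEdist_ne_top_of_nonempty_of_bounded (cc_nonempty K) (cc_nonempty L)
    (cc_compact K).isBounded (cc_compact L).isBounded

lemma dist_cc (K L : ConvexCompacts d) :
    dist K L = hausdorffDist (K : Set E) (L : Set E) := by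
  rw [Subtype.dist_eq, NonemptyCompacts.dist_eq]

/-- Lipschitz in the set argument. -/
lemma suppFn_le_add_dist (K L : ConvexCompacts d) {v : E} (hv : ‖v‖ = 1) :
    suppFn K v ≤ suppFn L v + dist K L := by
  apply suppFn_le
  intro x hx
  obtain ⟨y, hy, hxy⟩ := (cc_compact L).exists_infDist_eq_dist (cc_nonempty L) x
  have h1 : infDist x (L : Set E) ≤ dist K L := by
    rw [dist_cc]
    exact infDist_le_hausdorffDist_of_mem hx (hausdorffEdist_ne_top K L)
  have h2 : (inner ℝ v x : ℝ) - inner ℝ v y ≤ dist x y := by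
    rw [← inner_sub_right, dist_eq_norm]
    calc (inner ℝ v (x - y) : ℝ) ≤ ‖v‖ * ‖x - y‖ := real_inner_le_norm v (x - y)
      _ = ‖x - y‖ := by rw [hv, one_mul]
  have := inner_le_suppFn L v hy
  nlinarith [hxy ▸ h1]

lemma abs_suppFn_sub_le (K L : ConvexCompacts d) {v : E} (hv : ‖v‖ = 1) :
    |suppFn K v - suppFn L v| ≤ dist K L := by
  rw [abs_sub_le_iff]
  constructor
  · linarith [suppFn_le_add_dist K L hv]
  · linarith [suppFn_le_add_dist L K (by simpa [dist_comm] using hv), dist_comm K L]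

lemma suppFn_continuous_in_u (K : ConvexCompacts d) : Continuous (suppFn K) := by
  obtain ⟨R, hR⟩ := (cc_compact K).isBounded.exists_norm_le
  have key : ∀ v w : E, suppFn K v ≤ suppFn K w + |R| * ‖v - w‖ := by
    intro v w
    apply suppFn_le
    intro x hx
    have h2 : (inner ℝ v x : ℝ) - inner ℝ w x ≤ ‖v - w‖ * ‖x‖ := by
      rw [← inner_sub_left]
      exact real_inner_le_norm _ _
    have h3 : ‖x‖ ≤ |R| := (hR x hx).trans (le_abs_self R)
    have h4 := inner_le_suppFn K w hx
    nlinarith [norm_nonneg (v - w)]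
  have : LipschitzWith (Real.toNNReal |R|) (suppFn K) := by
    apply LipschitzWith.of_dist_le_mul
    intro v w
    rw [Real.dist_eq, Real.coe_toNNReal _ (abs_nonneg R), dist_eq_norm, abs_sub_le_iff]
    constructor
    · linarith [key v w]
    · rw [← norm_neg, neg_sub]; linarith [key w v]
  exact this.continuous

lemma suppFn_continuous_in_K (v : E) (hv : ‖v‖ = 1) :
    Continuous (fun K : ConvexCompacts d => suppFn K v) := by
  have : LipschitzWith 1 (fun K : ConvexCompacts d => suppFn K v) := by
    apply LipschitzWith.of_dist_le_mul
    intro K L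
    simpa [Real.dist_eq] using abs_suppFn_sub_le K L hv
  exact this.continuous

/-- Separation: support function bounds give Hausdorff distance bound. -/
lemma infDist_le_of_suppFn (K L : ConvexCompacts d) {r : ℝ} (hr : 0 ≤ r)
    (h : ∀ v : E, ‖v‖ = 1 → suppFn K v ≤ suppFn L v + r) :
    ∀ x ∈ (K : Set E), infDist x (L : Set E) ≤ r := by
  intro x hx
  by_contra hcon
  push_neg at hcon
  set C := cthickening r (L : Set E) with hC
  have hCconv : Convex ℝ C := L.2.cthickening r
  have hCclosed : IsClosed C := isClosed_cthickening
  have hxC : x ∉ C := by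
    intro hmem
    rw [mem_cthickening_iff] at hmem
    have : infDist x (L : Set E) ≤ r := by
      rw [infDist, ← ENNReal.ofReal_toReal (infEdist_ne_top (cc_nonempty L))] at *
      exact ENNReal.toReal_le_of_le_ofReal hr hmem
    linarith
  obtain ⟨f, c, hfc, hcx⟩ := geometric_hahn_banach_closed_point hCconv hCclosed hxC
  obtain ⟨w, hw⟩ := (InnerProductSpace.toDual ℝ E).surjective f
  have hfw : ∀ y, f y = (inner ℝ w y : ℝ) := fun y => by
    rw [← hw]; simp [InnerProductSpace.toDual_apply_apply]
  obtain ⟨y₀, hy₀⟩ := cc_nonempty L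
  have hy₀C : y₀ ∈ C := self_subset_cthickening _ hy₀
  have hwne : w ≠ 0 := by
    rintro rfl
    have h1 := hfc y₀ hy₀C
    rw [hfw] at h1 hcx
    simp at h1 hcx
    linarith
  have hwpos : (0:ℝ) < ‖w‖ := norm_pos_iff.2 hwne
  set v : E := ‖w‖⁻¹ • w with hv
  have hvnorm : ‖v‖ = 1 := by
    rw [hv, norm_smul, norm_inv, norm_norm, inv_mul_cancel₀ (ne_of_gt hwpos)]
  have hinner_wv : (inner ℝ w v : ℝ) = ‖w‖ := by
    rw [hv, real_inner_smul_right, real_inner_self_eq_norm_sq]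
    field_simp
  -- For y ∈ L, y + r • v ∈ C
  have hLbound : suppFn L v ≤ c / ‖w‖ - r := by
    apply suppFn_le
    intro y hy
    have hyC : y + r • v ∈ C := by
      apply mem_cthickening_of_dist_le _ y r _ hy
      rw [dist_eq_norm, add_sub_cancel_left, norm_smul, hvnorm, mul_one,
        Real.norm_eq_abs, abs_of_nonneg hr]
    have := hfc _ hyC
    rw [hfw, inner_add_right, real_inner_smul_right, hinner_wv] at this
    have hvy : (inner ℝ v y : ℝ) = (inner ℝ w y : ℝ) / ‖w‖ := by
      rw [hv, real_inner_smul_left]; field_simp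
    rw [hvy]
    rw [div_sub' (ne_of_gt hwpos), div_le_div_iff_of_pos_right hwpos]  -- may need fixing
    nlinarith
  have hKbound : c / ‖w‖ < suppFn K v := by
    have h1 : (inner ℝ v x : ℝ) = f x / ‖w‖ := by
      rw [hfw, hv, real_inner_smul_left]; field_simp
    have := inner_le_suppFn K v hx
    rw [h1] at this
    have h2 : c / ‖w‖ < f x / ‖w‖ := by gcongr
    linarith
  have := h v hvnorm
  linarith
end Aux

section Aux2
variable {d : ℕ}
local notation "E" => EuclideanSpace ℝ (Fin d)

lemma dist_le_of_suppFn (K L : ConvexCompacts d) {r : ℝ} (hr : 0 ≤ r)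
    (h : ∀ v : E, ‖v‖ = 1 → |suppFn K v - suppFn L v| ≤ r) :
    dist K L ≤ r := by
  rw [dist_cc]
  apply Metric.hausdorffDist_le_of_infDist hr
  · exact infDist_le_of_suppFn K L hr fun v hv => by
      have := h v hv; rw [abs_sub_le_iff] at this; linarith [this.1]
  · exact infDist_le_of_suppFn L K hr fun v hv => by
      have := h v hv; rw [abs_sub_le_iff] at this; linarith [this.2]

lemma closedBall_eq_iInter (L : ConvexCompacts d) (r : ℝ)
    (u : ℕ → E) (hu : ∀ n, u n ∈ Metric.sphere (0 : E) 1)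
    (hdense : Metric.sphere (0 : E) 1 ⊆ closure (Set.range u)) :
    Metric.closedBall L r =
      ⋂ n, {K : ConvexCompacts d | |suppFn K (u n) - suppFn L (u n)| ≤ r} := by
  rcases lt_or_ge r 0 with hr | hr
  · rw [Metric.closedBall_eq_empty.2 hr]
    refine (Set.eq_empty_of_forall_notMem ?_).symm
    intro K hK
    have := Set.mem_iInter.1 hK 0
    simp only [Set.mem_setOf_eq] at this
    linarith [abs_nonneg (suppFn K (u 0) - suppFn L (u 0))]
  · ext K
    simp only [Metric.mem_closedBall, Set.mem_iInter, Set.mem_setOf_eq]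
    constructor
    · intro hK n
      exact (abs_suppFn_sub_le K L (by simpa using hu n)).trans hK
    · intro hK
      apply dist_le_of_suppFn K L hr
      intro v hv
      have hclosed : IsClosed {w : E | |suppFn K w - suppFn L w| ≤ r} := by
        apply isClosed_le _ continuous_const
        exact ((suppFn_continuous_in_u K).sub (suppFn_continuous_in_u L)).abs
      have hsub : Set.range u ⊆ {w : E | |suppFn K w - suppFn L w| ≤ r} := by
        rintro _ ⟨n, rfl⟩; exact hK n
      have := hclosed.closure_subset ((closure_mono hsub) (hdense (by simpa using hv)))
      exact this

/-- In a second-countable metric space, a σ-algebra containing all closed balls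
contains the Borel σ-algebra. -/
lemma borel_le_of_closedBall {γ : Type*} [MetricSpace γ]
    [SecondCountableTopology γ] (G : MeasurableSpace γ)
    (h : ∀ (c : γ) (r : ℝ), MeasurableSet[G] (Metric.closedBall c r)) :
    borel γ ≤ G := by
  rw [borel]
  apply MeasurableSpace.generateFrom_le
  intro U hU
  rw [Set.mem_setOf_eq] at hU
  -- choose radii
  by_cases hUe : U = ∅
  · simp [hUe]
  have hch : ∀ x : U, ∃ ε : ℝ, 0 < ε ∧ Metric.ball (x : γ) ε ⊆ U := fun x =>
    Metric.isOpen_iff.1 hU x x.2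
  choose ε hεpos hεsub using hch
  have hUnion : ⋃ x : U, Metric.ball (x : γ) (ε x / 2) = U := by
    apply Set.Subset.antisymm
    · exact Set.iUnion_subset fun x =>
        (Metric.ball_subset_ball (by linarith [hεpos x])).trans (hεsub x)
    · intro y hy
      exact Set.mem_iUnion.2 ⟨⟨y, hy⟩, Metric.mem_ball_self (by linarith [hεpos ⟨y, hy⟩])⟩
  obtain ⟨T, hTc, hTU⟩ := TopologicalSpace.isOpen_iUnion_countable
    (fun x : U => Metric.ball (x : γ) (ε x / 2)) (fun x => Metric.isOpen_ball)
  have hUT : U = ⋃ x ∈ T, Metric.closedBall (x : γ) (ε x / 2) := by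
    apply Set.Subset.antisymm
    · intro y hy
      have hy' : y ∈ ⋃ i ∈ T, Metric.ball (i : γ) (ε i / 2) := by
        rw [hTU, hUnion]; exact hy
      exact (Set.iUnion₂_mono fun x _ => Metric.ball_subset_closedBall) hy'
    · apply Set.iUnion₂_subset
      intro x _
      exact (Metric.closedBall_subset_ball (by linarith [hεpos x])).trans (hεsub x)
  rw [hUT]
  exact MeasurableSet.biUnion hTc fun x _ => h _ _
end Aux2

/-- If `X`, `Y` are random compact convex sets in ℝ^d and `(uₙ)` is a dense
sequence in the unit sphere such that for every finite index set `I` the random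
vectors `(h(X,uᵢ))_{i∈I}` and `(h(Y,uᵢ))_{i∈I}` are equal in distribution, then
`X` and `Y` are equal in distribution. -/
theorem eq_distribution_of_fdds {d : ℕ} {Ω : Type*} [MeasurableSpace Ω]
    [MeasurableSpace (ConvexCompacts d)] [BorelSpace (ConvexCompacts d)]
    (P : Measure Ω) [IsProbabilityMeasure P]
    (X Y : Ω → ConvexCompacts d) (hX : Measurable X) (hY : Measurable Y)
    (u : ℕ → EuclideanSpace ℝ (Fin d))
    (hu : ∀ n, u n ∈ Metric.sphere (0 : EuclideanSpace ℝ (Fin d)) 1)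
    (hdense : Metric.sphere (0 : EuclideanSpace ℝ (Fin d)) 1 ⊆
      closure (Set.range u))
    (hfdd : ∀ I : Finset ℕ,
      P.map (fun ω => fun i : I => suppFn (X ω) (u i)) =
      P.map (fun ω => fun i : I => suppFn (Y ω) (u i))) :
    P.map X = P.map Y := by
  have hun : ∀ n, ‖u n‖ = 1 := fun n => by simpa using hu n
  set φ : ConvexCompacts d → (ℕ → ℝ) := fun K n => suppFn K (u n) with hφ
  have hφcont : Continuous φ :=
    continuous_pi fun n => suppFn_continuous_in_K (u n) (hun n)
  have hφmeas : Measurable φ := hφcont.measurable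
  have hmap : (P.map X).map φ = (P.map Y).map φ := by
    rw [Measure.map_map hφmeas hX, Measure.map_map hφmeas hY]
    have hPX : IsProbabilityMeasure (P.map (φ ∘ X)) :=
      Measure.isProbabilityMeasure_map (hφmeas.comp hX).aemeasurable
    have hPY : IsProbabilityMeasure (P.map (φ ∘ Y)) :=
      Measure.isProbabilityMeasure_map (hφmeas.comp hY).aemeasurable
    apply ext_of_generate_finite _ generateFrom_measurableCylinders.symm
      isPiSystem_measurableCylinders _ (by simp)
    intro s hs
    obtain ⟨I, S, hS, rfl⟩ := (mem_measurableCylinders _).1 hs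
    have hmX : Measurable (fun ω => fun i : I => suppFn (X ω) (u i)) :=
      measurable_pi_lambda _ fun i =>
        ((suppFn_continuous_in_K (u i) (hun i)).measurable).comp hX
    have hmY : Measurable (fun ω => fun i : I => suppFn (Y ω) (u i)) :=
      measurable_pi_lambda _ fun i =>
        ((suppFn_continuous_in_K (u i) (hun i)).measurable).comp hY
    have e1 : (φ ∘ X) ⁻¹' (cylinder I S) =
        (fun ω => fun i : I => suppFn (X ω) (u i)) ⁻¹' S := rfl
    have e2 : (φ ∘ Y) ⁻¹' (cylinder I S) =
        (fun ω => fun i : I => suppFn (Y ω) (u i)) ⁻¹' S := rfl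
    rw [Measure.map_apply (hφmeas.comp hX) (hS.cylinder _),
      Measure.map_apply (hφmeas.comp hY) (hS.cylinder _), e1, e2,
      ← Measure.map_apply hmX hS, ← Measure.map_apply hmY hS, hfdd I]
  have hballs : ∀ (L : ConvexCompacts d) (r : ℝ),
      MeasurableSet[MeasurableSpace.comap φ inferInstance] (Metric.closedBall L r) := by
    intro L r
    rw [closedBall_eq_iInter L r u hu hdense]
    apply MeasurableSet.iInter
    intro n
    refine ⟨{p : ℕ → ℝ | |p n - suppFn L (u n)| ≤ r}, ?_, rfl⟩
    exact measurableSet_le (((measurable_pi_apply n).sub measurable_const).abs)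
      measurable_const
  have hle : (inferInstance : MeasurableSpace (ConvexCompacts d)) ≤
      MeasurableSpace.comap φ inferInstance := by
    rw [‹BorelSpace (ConvexCompacts d)›.measurable_eq]
    exact borel_le_of_closedBall _ hballs
  ext A hA
  obtain ⟨B, hB, rfl⟩ := hle A hA
  rw [← Measure.map_apply hφmeas hB, ← Measure.map_apply hφmeas hB, hmap]
end
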